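/- For the family H_m (m ≥ 2), the F-polynomials F_{H_m}(u,v) = −(2m+1)u^{v^{−1}−v} + 2u^{−1} + (2m−1) are pairwise distinct: if m₁ ≠ m₂ (both ≥ 2) then F_{H_{m₁}}(u,v) ≠ F_{H_{m₂}}(u,v). In particular the F-polynomial distinguishes infinitely many knotoids, while all H_m share the same index polynomial F_{H_m}(t) = −2 + 2t^{−1} and the same n-th polynomials Z^n_{H_m}(t) (equal to −2+2t^{−1} for n=1 and 0 for n ≥ 2). -/

import Mathlib

open Finsupp

/-- Formal Laurent polynomials in `v` over `ℤ`, used as exponents of `u`. -/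
abbrev LaurentExp : Type := ℤ →₀ ℤ

/-- Formal `ℤ`-linear combinations of symbols `u^p`, `p` a Laurent polynomial in `v`. -/
abbrev FPoly : Type := LaurentExp →₀ ℤ

/-- A combinatorial Gauss diagram of a knotoid diagram: `n` signed directed chords,
whose `2*n` endpoints (an over-endpoint and an under-endpoint for each chord) occupy
distinct positions along the oriented arc.  The two endpoints of the arc itself lie
before position `0` and after position `2*n - 1`. -/
structure GaussDiagram where
  n : ℕ
  sign : Fin n → ℤ
  overEnd : Fin n → Fin (2 * n)
  under : Fin n → Fin (2 * n)
  sign_pm : ∀ c, sign c = 1 ∨ sign c = -1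
  endpoints_inj : Function.Injective (Sum.elim overEnd under)

namespace GaussDiagram

variable (G : GaussDiagram)

/-- Position `p` lies strictly between the two endpoints of chord `c`,
i.e. on the side of `c` NOT containing the endpoints of the arc
(the complement of the lead side of `c`). -/
def between (c : Fin G.n) (p : Fin (2 * G.n)) : Prop :=
  min (G.overEnd c).val (G.under c).val < p.val ∧ p.val < max (G.overEnd c).val (G.under c).val

instance (c : Fin G.n) (p : Fin (2 * G.n)) : Decidable (G.between c p) := by
  unfold between; infer_instance

/-- Chord `e` crosses chord `c`: exactly one endpoint of `e` lies between the endpoints of `c`. -/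
def crosses (c e : Fin G.n) : Prop :=
  e ≠ c ∧ (G.between c (G.overEnd e) ↔ ¬ G.between c (G.under e))

instance (c e : Fin G.n) : Decidable (G.crosses c e) := by
  unfold crosses; infer_instance

/-- The signed contribution of the endpoints of chord `e` lying on the lead side of `c`
(the over-endpoint counts `sign e`, the under-endpoint counts `- sign e`). -/
def contrib (c e : Fin G.n) : ℤ :=
  (if ¬ G.between c (G.overEnd e) then G.sign e else 0)
    + (if ¬ G.between c (G.under e) then - G.sign e else 0)

/-- The intersection index `i(c)`: the sum of the signs of the chord-endpoints lying on
the lead side of `c`, excluding the endpoints of `c` itself. -/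
def i (c : Fin G.n) : ℤ := ∑ e ∈ Finset.univ.erase c, G.contrib c e

/-- `r(c)`: chords crossing `c` whose over-endpoint lies on the lead side of `c`
(chords pointing away from the lead side). -/
def rset (c : Fin G.n) : Finset (Fin G.n) :=
  Finset.univ.filter fun e => G.crosses c e ∧ ¬ G.between c (G.overEnd e)

/-- `l(c)`: chords crossing `c` whose under-endpoint lies on the lead side of `c`
(chords pointing toward the lead side). -/
def lset (c : Fin G.n) : Finset (Fin G.n) :=
  Finset.univ.filter fun e => G.crosses c e ∧ ¬ G.between c (G.under e)

end GaussDiagram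

/-- The reduction map `φ` modulo `m`, realized by canonical representatives in `ℤ`:
for `m ≠ 0` it picks the representative in `[0, m)`; for `m = 0` it is the identity
(no reduction, matching `ℤ[v,v⁻¹]/(v⁰ - 1) = ℤ[v,v⁻¹]`). -/
def redExp (m : ℕ) (k : ℤ) : ℤ := if m = 0 then k else k % (m : ℤ)

namespace GaussDiagram

variable (G : GaussDiagram)

/-- The index function `g_c(v) = Σ_{r ∈ r(c)} sign(r) v^{φ_c(i(r))} - Σ_{l ∈ l(c)} sign(l) v^{φ_c(-i(l))}`,
an element of `ℤ[v,v⁻¹]/(v^{|i(c)|} - 1)` realized via canonical exponent representatives. -/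
noncomputable def gfun (c : Fin G.n) : LaurentExp :=
  (∑ e ∈ G.rset c, G.sign e • Finsupp.single (redExp (G.i c).natAbs (G.i e)) (1 : ℤ))
    - ∑ e ∈ G.lset c, G.sign e • Finsupp.single (redExp (G.i c).natAbs (- G.i e)) (1 : ℤ)

/-- The F-polynomial `F_G(u,v) = Σ_c sign(c) (u^{g_c(v)} - 1)`. -/
noncomputable def F : FPoly :=
  ∑ c : Fin G.n, G.sign c • (Finsupp.single (G.gfun c) (1 : ℤ) - Finsupp.single 0 1)

end GaussDiagram

/-- Over-endpoint positions for the family `H_m`: chord `0` is `a`, chord `1` is `b`,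
chord `2` is `c`, chords `3,…,m+2` are `d₁,…,d_m`, chords `m+3,…,2m+2` are `e₁,…,e_m`. -/
def Hover (m c : ℕ) : ℕ :=
  if c = 0 then 0 else if c = 1 then 2 * m + 5 else if c = 2 then 2
  else if c ≤ m + 2 then 4 * m + 11 - 2 * c else 2 * c - (2 * m + 1)

/-- Under-endpoint positions for the family `H_m`. -/
def Hunder (m c : ℕ) : ℕ :=
  if c = 0 then 3 else if c = 1 then 1 else if c = 2 then 2 * m + 4
  else if c ≤ m + 2 then 2 * c - 2 else 6 * m + 10 - 2 * c

/-- The Gauss diagram of the knotoid diagram `H_m` of Example 4.2: `2m + 3` chords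
`a, b, c, d₁, …, d_m, e₁, …, e_m`, with `sign(a) = sign(dᵢ) = sign(eᵢ) = -1` and
`sign(b) = sign(c) = 1`. -/
def H (m : ℕ) : GaussDiagram where
  n := 2 * m + 3
  sign c := if c.val = 1 ∨ c.val = 2 then 1 else -1
  overEnd c := ⟨Hover m c.val, by have := c.isLt; unfold Hover; split_ifs <;> omega⟩
  under c := ⟨Hunder m c.val, by have := c.isLt; unfold Hunder; split_ifs <;> omega⟩
  sign_pm c := by split_ifs <;> simp
  endpoints_inj := by
    intro x y h
    have hval := congrArg Fin.val h
    rcases x with x | x <;> rcases y with y | y <;>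
      have hx := x.isLt <;> have hy := y.isLt <;>
      simp only [Sum.elim_inl, Sum.elim_inr] at hval <;>
      first
        | (refine congrArg _ (Fin.ext ?_) ;
           simp only [Hover, Hunder] at hval ; split_ifs at hval <;> omega)
        | (exfalso ; simp only [Hover, Hunder] at hval ; split_ifs at hval <;> omega)

namespace GaussDiagram

variable (G : GaussDiagram)

/-- `C_n(G)`: the chords whose intersection index is a multiple of `n`. -/
def Cnset (nn : ℕ) : Finset (Fin G.n) :=
  Finset.univ.filter fun c => (nn : ℤ) ∣ G.i c

/-- `d_n(c)`: the sum of the signs of the endpoints on the lead side of `c` belonging to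
chords of `C_n(G) \ {c}`. -/
def dfun (nn : ℕ) (c : Fin G.n) : ℤ :=
  ∑ e ∈ (G.Cnset nn).erase c, G.contrib c e

/-- The `n`-th polynomial `Z^n_D(t) = Σ_{c ∈ C_n} sign(c) (t^{d_n(c)} - 1)`. -/
noncomputable def Zn (nn : ℕ) : ℤ →₀ ℤ :=
  ∑ c ∈ G.Cnset nn, G.sign c • (Finsupp.single (G.dfun nn c) (1 : ℤ) - Finsupp.single 0 1)

/-- The index polynomial `F_D(t) = Σ_c sign(c)(t^{i(c)} - 1)`. -/
noncomputable def indexPoly : ℤ →₀ ℤ :=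
  ∑ c : Fin G.n, G.sign c • (Finsupp.single (G.i c) (1 : ℤ) - Finsupp.single 0 1)

end GaussDiagram

namespace HmAux

open GaussDiagram Finsupp

lemma sum_if_eq {M : Type*} [AddCommMonoid M] {n j : ℕ} (hj : j < n) (A : M) :
    (∑ k ∈ Finset.range n, if k = j then A else 0) = A := by
  rw [Finset.sum_ite_eq' (Finset.range n) j (fun _ => A)]
  simp [hj]

lemma sum_if_icc {M : Type*} [AddCommMonoid M] {n a b : ℕ} (hb : b < n) (A : M) :
    (∑ k ∈ Finset.range n, if a ≤ k ∧ k ≤ b then A else 0) = (b + 1 - a) • A := by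
  have h1 : ∀ k, (if a ≤ k ∧ k ≤ b then A else 0) = if k ∈ Finset.Icc a b then A else 0 := by
    intro k; simp [Finset.mem_Icc]
  simp_rw [h1]
  rw [Finset.sum_ite_mem, Finset.inter_eq_right.mpr, Finset.sum_const, Nat.card_Icc]
  intro x hx; simp only [Finset.mem_Icc] at hx; exact Finset.mem_range.mpr (by omega)

def ctab (m c e : ℕ) : ℤ :=
  if c = 1 ∨ c = 2 then
    (if e = 0 ∨ (3 ≤ e ∧ e ≤ m + 2) then -1 else if m + 3 ≤ e then 1 else 0)
  else if c = 0 then (if e = 1 then 1 else if e = 2 then -1 else 0)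
  else (if e = 1 then -1 else if e = 2 then 1 else 0)

set_option maxHeartbeats 4000000 in
lemma contrib_eq {m : ℕ} (hm : 2 ≤ m) (c e : Fin ((H m).n)) :
    (H m).contrib c e = ctab m c.val e.val := by
  have hc : c.val < 2 * m + 3 := c.isLt
  have he : e.val < 2 * m + 3 := e.isLt
  simp only [GaussDiagram.contrib, GaussDiagram.between, H, Hover, Hunder, ctab]
  split_ifs <;> omega

def itab (c : ℕ) : ℤ := if c = 1 ∨ c = 2 then -1 else 0

lemma i_eq {m : ℕ} (hm : 2 ≤ m) (c : Fin ((H m).n)) :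
    (H m).i c = itab c.val := by
  have hc : c.val < 2 * m + 3 := c.isLt
  unfold GaussDiagram.i
  rw [Finset.sum_erase _ (by rw [contrib_eq hm]; unfold ctab; split_ifs <;> omega)]
  have : ∀ e : Fin ((H m).n), (H m).contrib c e = ctab m c.val e.val := contrib_eq hm c
  simp_rw [this]
  rw [Fin.sum_univ_eq_sum_range (fun k => ctab m c.val k) ((H m).n)]
  show (∑ i ∈ Finset.range (2 * m + 3), ctab m (↑c) i) = itab ↑c
  by_cases h12 : c.val = 1 ∨ c.val = 2
  · have hpt : ∀ k ∈ Finset.range (2 * m + 3), ctab m c.val k =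
        (if k = 0 then (-1 : ℤ) else 0) + ((if 3 ≤ k ∧ k ≤ m + 2 then (-1 : ℤ) else 0)
          + (if m + 3 ≤ k ∧ k ≤ 2 * m + 2 then (1 : ℤ) else 0)) := by
      intro k hk
      have hk' := Finset.mem_range.mp hk
      unfold ctab; split_ifs <;> omega
    rw [Finset.sum_congr rfl hpt, Finset.sum_add_distrib, Finset.sum_add_distrib,
      sum_if_eq (by omega), sum_if_icc (by omega), sum_if_icc (by omega)]
    unfold itab
    rw [if_pos h12]
    have h1 : m + 2 + 1 - 3 = m := by omega
    have h2 : 2 * m + 2 + 1 - (m + 3) = m := by omega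
    rw [h1, h2]
    simp
  · have hpt : ∀ k ∈ Finset.range (2 * m + 3), ctab m c.val k =
        (if k = 1 then (if c.val = 0 then (1:ℤ) else -1) else 0)
          + (if k = 2 then (if c.val = 0 then (-1:ℤ) else 1) else 0) := by
      intro k hk
      unfold ctab; split_ifs <;> omega
    rw [Finset.sum_congr rfl hpt, Finset.sum_add_distrib,
      sum_if_eq (by omega), sum_if_eq (by omega)]
    unfold itab
    rw [if_neg h12]
    split_ifs <;> ring

lemma not_between_over (G : GaussDiagram) (c : Fin G.n) : ¬ G.between c (G.overEnd c) := by
  unfold GaussDiagram.between; omega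

lemma not_between_under (G : GaussDiagram) (c : Fin G.n) : ¬ G.between c (G.under c) := by
  unfold GaussDiagram.between; omega

lemma mem_rset_iff (G : GaussDiagram) (c e : Fin G.n) :
    e ∈ G.rset c ↔ G.contrib c e = G.sign e := by
  rw [GaussDiagram.rset, Finset.mem_filter]
  simp only [GaussDiagram.rset, Finset.mem_filter, Finset.mem_univ, true_and,
    GaussDiagram.crosses, GaussDiagram.contrib]
  rcases G.sign_pm e with h | h <;> rw [h] <;>
    by_cases h1 : G.between c (G.overEnd e) <;>
    by_cases h2 : G.between c (G.under e) <;>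
    simp [h1, h2]
  · rintro rfl; exact not_between_under _ _ h2
  · rintro rfl; exact not_between_under _ _ h2

lemma mem_lset_iff (G : GaussDiagram) (c e : Fin G.n) :
    e ∈ G.lset c ↔ G.contrib c e = -G.sign e := by
  rw [GaussDiagram.lset, Finset.mem_filter]
  simp only [GaussDiagram.lset, Finset.mem_filter, Finset.mem_univ, true_and,
    GaussDiagram.crosses, GaussDiagram.contrib]
  rcases G.sign_pm e with h | h <;> rw [h] <;>
    by_cases h1 : G.between c (G.overEnd e) <;>
    by_cases h2 : G.between c (G.under e) <;>
    simp [h1, h2]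
  · rintro rfl; exact not_between_over _ _ h1
  · rintro rfl; exact not_between_over _ _ h1

def stab (e : ℕ) : ℤ := if e = 1 ∨ e = 2 then 1 else -1

lemma sign_eq {m : ℕ} (e : Fin ((H m).n)) : (H m).sign e = stab e.val := rfl

lemma rset_eq {m : ℕ} (hm : 2 ≤ m) (c : Fin ((H m).n)) :
    (H m).rset c = Finset.univ.filter (fun e => ctab m c.val e.val = stab e.val) := by
  ext e
  rw [mem_rset_iff, contrib_eq hm, sign_eq]
  simp

lemma lset_eq {m : ℕ} (hm : 2 ≤ m) (c : Fin ((H m).n)) :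
    (H m).lset c = Finset.univ.filter (fun e => ctab m c.val e.val = -stab e.val) := by
  ext e
  rw [mem_lset_iff, contrib_eq hm, sign_eq]
  simp

noncomputable def p0 : LaurentExp := Finsupp.single (-1) 1 - Finsupp.single 1 1
noncomputable def p1 : LaurentExp := -Finsupp.single 0 1

lemma gfun_eq {m : ℕ} (hm : 2 ≤ m) (c : Fin ((H m).n)) :
    (H m).gfun c = if c.val = 1 ∨ c.val = 2 then p1 else p0 := by
  have hc : c.val < 2 * m + 3 := c.isLt
  unfold GaussDiagram.gfun
  rw [rset_eq hm, lset_eq hm, Finset.sum_filter, Finset.sum_filter]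
  simp_rw [i_eq hm, sign_eq]
  by_cases h12 : c.val = 1 ∨ c.val = 2
  · have hna : (itab c.val).natAbs = 1 := by unfold itab; rw [if_pos h12]; rfl
    have hr : ∀ k : ℤ, redExp 1 k = 0 := fun k => by unfold redExp; simp [Int.emod_one]
    simp_rw [hna, hr]
    rw [if_pos h12]
    have hpt1 : ∀ e : Fin ((H m).n),
        (if ctab m c.val e.val = stab e.val then stab e.val • Finsupp.single (0:ℤ) (1:ℤ) else 0)
          = (fun k => (if k = 0 then -Finsupp.single (0:ℤ) (1:ℤ) else 0)
              + (if 3 ≤ k ∧ k ≤ m + 2 then -Finsupp.single (0:ℤ) (1:ℤ) else 0)) e.val := by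
      intro e
      have he : e.val < 2 * m + 3 := e.isLt
      simp only [ctab, stab, if_pos h12]
      split_ifs <;>
        first
        | omega
        | exact (by assumption : False).elim
        | (simp only [neg_smul, one_smul, neg_neg, add_zero, zero_add]; done)
        | simp_all
    have hpt2 : ∀ e : Fin ((H m).n),
        (if ctab m c.val e.val = -stab e.val then stab e.val • Finsupp.single (0:ℤ) (1:ℤ) else 0)
          = (fun k => (if m + 3 ≤ k ∧ k ≤ 2 * m + 2 then -Finsupp.single (0:ℤ) (1:ℤ) else 0)) e.val := by
      intro e
      have he : e.val < 2 * m + 3 := e.isLt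
      simp only [ctab, stab, if_pos h12]
      split_ifs <;>
        first
        | omega
        | exact (by assumption : False).elim
        | (simp only [neg_smul, one_smul, neg_neg, add_zero, zero_add]; done)
        | simp_all
    simp_rw [hpt1, hpt2]
    rw [Fin.sum_univ_eq_sum_range (fun k => (if k = 0 then -Finsupp.single (0:ℤ) (1:ℤ) else 0)
          + (if 3 ≤ k ∧ k ≤ m + 2 then -Finsupp.single (0:ℤ) (1:ℤ) else 0)) ((H m).n),
        Fin.sum_univ_eq_sum_range (fun k =>
          (if m + 3 ≤ k ∧ k ≤ 2 * m + 2 then -Finsupp.single (0:ℤ) (1:ℤ) else 0)) ((H m).n)]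
    show (∑ k ∈ Finset.range (2 * m + 3), _) - (∑ k ∈ Finset.range (2 * m + 3), _) = p1
    rw [Finset.sum_add_distrib, sum_if_eq (by omega), sum_if_icc (by omega),
      sum_if_icc (by omega)]
    have h1 : m + 2 + 1 - 3 = m := by omega
    have h2 : 2 * m + 2 + 1 - (m + 3) = m := by omega
    rw [h1, h2]
    unfold p1; abel
  · have hna : (itab c.val).natAbs = 0 := by unfold itab; rw [if_neg h12]; rfl
    have hr : ∀ k : ℤ, redExp 0 k = k := fun k => by unfold redExp; simp
    simp_rw [hna, hr]
    rw [if_neg h12]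
    by_cases hc0 : c.val = 0
    · have hpt1 : ∀ e : Fin ((H m).n),
          (if ctab m c.val e.val = stab e.val then stab e.val • Finsupp.single (itab e.val) (1:ℤ) else 0)
            = (fun k => (if k = 1 then Finsupp.single (-1:ℤ) (1:ℤ) else 0)) e.val := by
        intro e
        have he : e.val < 2 * m + 3 := e.isLt
        simp only [ctab, stab, itab, if_neg h12, if_pos hc0]
        split_ifs <;>
        first
        | omega
        | exact (by assumption : False).elim
        | (simp only [neg_smul, one_smul, neg_neg, add_zero, zero_add]; done)
        | simp_all
      have hpt2 : ∀ e : Fin ((H m).n),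
          (if ctab m c.val e.val = -stab e.val then stab e.val • Finsupp.single (-itab e.val) (1:ℤ) else 0)
            = (fun k => (if k = 2 then Finsupp.single (1:ℤ) (1:ℤ) else 0)) e.val := by
        intro e
        have he : e.val < 2 * m + 3 := e.isLt
        simp only [ctab, stab, itab, if_neg h12, if_pos hc0]
        split_ifs <;>
        first
        | omega
        | exact (by assumption : False).elim
        | (simp only [neg_smul, one_smul, neg_neg, add_zero, zero_add]; done)
        | simp_all
      simp_rw [hpt1, hpt2]
      rw [Fin.sum_univ_eq_sum_range (fun k => (if k = 1 then Finsupp.single (-1:ℤ) (1:ℤ) else 0)) ((H m).n),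
          Fin.sum_univ_eq_sum_range (fun k => (if k = 2 then Finsupp.single (1:ℤ) (1:ℤ) else 0)) ((H m).n)]
      show (∑ k ∈ Finset.range (2 * m + 3), _) - (∑ k ∈ Finset.range (2 * m + 3), _) = p0
      rw [sum_if_eq (by omega), sum_if_eq (by omega)]
      rfl
    · have hpt1 : ∀ e : Fin ((H m).n),
          (if ctab m c.val e.val = stab e.val then stab e.val • Finsupp.single (itab e.val) (1:ℤ) else 0)
            = (fun k => (if k = 2 then Finsupp.single (-1:ℤ) (1:ℤ) else 0)) e.val := by
        intro e
        have he : e.val < 2 * m + 3 := e.isLt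
        simp only [ctab, stab, itab, if_neg h12, if_neg hc0]
        split_ifs <;>
        first
        | omega
        | exact (by assumption : False).elim
        | (simp only [neg_smul, one_smul, neg_neg, add_zero, zero_add]; done)
        | simp_all
      have hpt2 : ∀ e : Fin ((H m).n),
          (if ctab m c.val e.val = -stab e.val then stab e.val • Finsupp.single (-itab e.val) (1:ℤ) else 0)
            = (fun k => (if k = 1 then Finsupp.single (1:ℤ) (1:ℤ) else 0)) e.val := by
        intro e
        have he : e.val < 2 * m + 3 := e.isLt
        simp only [ctab, stab, itab, if_neg h12, if_neg hc0]
        split_ifs <;>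
        first
        | omega
        | exact (by assumption : False).elim
        | (simp only [neg_smul, one_smul, neg_neg, add_zero, zero_add]; done)
        | simp_all
      simp_rw [hpt1, hpt2]
      rw [Fin.sum_univ_eq_sum_range (fun k => (if k = 2 then Finsupp.single (-1:ℤ) (1:ℤ) else 0)) ((H m).n),
          Fin.sum_univ_eq_sum_range (fun k => (if k = 1 then Finsupp.single (1:ℤ) (1:ℤ) else 0)) ((H m).n)]
      show (∑ k ∈ Finset.range (2 * m + 3), _) - (∑ k ∈ Finset.range (2 * m + 3), _) = p0
      rw [sum_if_eq (by omega), sum_if_eq (by omega)]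
      rfl

lemma p0_apply : p0 (-1) = 1 := by
  unfold p0
  simp [Finsupp.single_apply]

lemma p1_ne_p0 : p1 ≠ p0 := by
  intro h
  have h1 := congrArg (fun f : LaurentExp => f (-1)) h
  simp only [p0_apply, p1, Finsupp.neg_apply, Finsupp.single_apply] at h1
  norm_num at h1

lemma zero_ne_p0 : (0 : LaurentExp) ≠ p0 := by
  intro h
  have h1 := congrArg (fun f : LaurentExp => f (-1)) h
  simp only [p0_apply, Finsupp.coe_zero, Pi.zero_apply] at h1
  norm_num at h1

lemma F_apply {m : ℕ} (hm : 2 ≤ m) : (H m).F p0 = -(2 * (m:ℤ) + 1) := by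
  unfold GaussDiagram.F
  rw [Finsupp.finset_sum_apply]
  have hpt : ∀ c : Fin ((H m).n),
      (((H m).sign c • (Finsupp.single ((H m).gfun c) (1:ℤ) - Finsupp.single 0 1) : FPoly)) p0
        = (fun k => if k = 1 ∨ k = 2 then (0:ℤ) else -1) c.val := by
    intro c
    rw [gfun_eq hm, sign_eq]
    by_cases h12 : c.val = 1 ∨ c.val = 2
    · simp only [stab, if_pos h12]
      simp [Finsupp.sub_apply, Finsupp.smul_apply, Finsupp.single_apply, p1_ne_p0, zero_ne_p0]
    · simp only [stab, if_neg h12]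
      simp [Finsupp.sub_apply, Finsupp.smul_apply, Finsupp.single_apply, zero_ne_p0]
  rw [Finset.sum_congr rfl (fun c _ => hpt c)]
  rw [Fin.sum_univ_eq_sum_range (fun k => if k = 1 ∨ k = 2 then (0:ℤ) else -1) ((H m).n)]
  show (∑ k ∈ Finset.range (2 * m + 3), _) = _
  have hpt2 : ∀ k ∈ Finset.range (2 * m + 3), (if k = 1 ∨ k = 2 then (0:ℤ) else -1)
      = -1 + ((if k = 1 then (1:ℤ) else 0) + (if k = 2 then (1:ℤ) else 0)) := by
    intro k _
    split_ifs <;> omega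
  rw [Finset.sum_congr rfl hpt2, Finset.sum_add_distrib, Finset.sum_add_distrib,
    sum_if_eq (by omega : 1 < 2 * m + 3), sum_if_eq (by omega : 2 < 2 * m + 3),
    Finset.sum_const, Finset.card_range]
  push_cast
  ring

lemma indexPoly_eq {m : ℕ} (hm : 2 ≤ m) :
    (H m).indexPoly
      = (2 : ℤ) • Finsupp.single (-1 : ℤ) (1 : ℤ) - (2 : ℤ) • Finsupp.single 0 1 := by
  unfold GaussDiagram.indexPoly
  have hpt : ∀ c : Fin ((H m).n),
      (H m).sign c • (Finsupp.single ((H m).i c) (1:ℤ) - Finsupp.single 0 1)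
        = (fun k => (if k = 1 then Finsupp.single (-1:ℤ) (1:ℤ) - Finsupp.single 0 1 else 0)
            + (if k = 2 then Finsupp.single (-1:ℤ) (1:ℤ) - Finsupp.single 0 1 else 0)) c.val := by
    intro c
    rw [i_eq hm, sign_eq]
    unfold itab stab
    by_cases h1 : c.val = 1
    · simp only [if_pos (Or.inl h1 : c.val = 1 ∨ c.val = 2), if_pos h1,
        if_neg (show ¬ c.val = 2 by omega), one_smul, add_zero]
    · by_cases h2 : c.val = 2
      · simp only [if_pos (Or.inr h2 : c.val = 1 ∨ c.val = 2), if_neg h1, if_pos h2,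
          one_smul, zero_add]
      · simp only [if_neg (show ¬ (c.val = 1 ∨ c.val = 2) by omega), if_neg h1, if_neg h2,
          sub_self, smul_zero, add_zero]
  rw [Finset.sum_congr rfl (fun c _ => hpt c)]
  rw [Fin.sum_univ_eq_sum_range (fun k =>
      (if k = 1 then Finsupp.single (-1:ℤ) (1:ℤ) - Finsupp.single 0 1 else 0)
        + (if k = 2 then Finsupp.single (-1:ℤ) (1:ℤ) - Finsupp.single 0 1 else 0)) ((H m).n)]
  show (∑ k ∈ Finset.range (2 * m + 3), _) = _
  rw [Finset.sum_add_distrib, sum_if_eq (by omega : 1 < 2 * m + 3),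
    sum_if_eq (by omega : 2 < 2 * m + 3)]
  rw [two_smul, two_smul]
  abel

lemma Cnset_one {m : ℕ} : (H m).Cnset 1 = Finset.univ := by
  apply Finset.filter_true_of_mem
  intro c _
  simp

lemma Zn_one {m : ℕ} (hm : 2 ≤ m) : (H m).Zn 1 = (H m).indexPoly := by
  unfold GaussDiagram.Zn GaussDiagram.dfun
  simp_rw [Cnset_one]
  unfold GaussDiagram.indexPoly GaussDiagram.i
  rfl

lemma Zn_ge2 {m : ℕ} (hm : 2 ≤ m) (nn : ℕ) (h2 : 2 ≤ nn) : (H m).Zn nn = 0 := by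
  unfold GaussDiagram.Zn
  apply Finset.sum_eq_zero
  intro c hcmem
  have hic : ¬(c.val = 1 ∨ c.val = 2) := by
    intro h
    have hdvd := (Finset.mem_filter.mp hcmem).2
    rw [i_eq hm] at hdvd
    unfold itab at hdvd
    rw [if_pos h] at hdvd
    have h3 : (nn:ℤ) ∣ 1 := dvd_neg.mp hdvd
    have h4 := Int.le_of_dvd one_pos h3
    omega
  have hcd : (H m).dfun nn c = 0 := by
    unfold GaussDiagram.dfun
    apply Finset.sum_eq_zero
    intro e hemem
    have he2 := Finset.mem_erase.mp hemem
    have hie : ¬(e.val = 1 ∨ e.val = 2) := by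
      intro h
      have hdvd := (Finset.mem_filter.mp he2.2).2
      rw [i_eq hm] at hdvd
      unfold itab at hdvd
      rw [if_pos h] at hdvd
      have h3 : (nn:ℤ) ∣ 1 := dvd_neg.mp hdvd
      have h4 := Int.le_of_dvd one_pos h3
      omega
    rw [contrib_eq hm]
    unfold ctab
    split_ifs <;> omega
  rw [hcd, sub_self, smul_zero]

end HmAux

/-- the F-polynomials of the family `H_m` (`m ≥ 2`) are pairwise distinct,
so the F-polynomial distinguishes the knotoids `H_m` from each other, while they all
share the same index polynomial `F_{H_m}(t) = -2 + 2t^{-1}` and the same `n`-th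
polynomials (`Z¹ = -2 + 2t^{-1}` and `Z^n = 0` for `n ≥ 2`). -/
theorem Hm_pairwise_distinct :
    (∀ m₁ m₂ : ℕ, 2 ≤ m₁ → 2 ≤ m₂ → m₁ ≠ m₂ → (H m₁).F ≠ (H m₂).F) ∧
    (∀ m : ℕ, 2 ≤ m →
      (H m).indexPoly
        = (2 : ℤ) • Finsupp.single (-1 : ℤ) (1 : ℤ) - (2 : ℤ) • Finsupp.single 0 1 ∧
      (H m).Zn 1
        = (2 : ℤ) • Finsupp.single (-1 : ℤ) (1 : ℤ) - (2 : ℤ) • Finsupp.single 0 1 ∧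
      (∀ nn : ℕ, 2 ≤ nn → (H m).Zn nn = 0)) := by
  constructor
  · intro m₁ m₂ h1 h2 hne heq
    have h := congrArg (fun f : FPoly => f HmAux.p0) heq
    change (H m₁).F HmAux.p0 = (H m₂).F HmAux.p0 at h
    rw [HmAux.F_apply h1, HmAux.F_apply h2] at h
    exact hne (by omega)
  · intro m hm
    exact ⟨HmAux.indexPoly_eq hm,
      by rw [HmAux.Zn_one hm]; exact HmAux.indexPoly_eq hm,
      fun nn h => HmAux.Zn_ge2 hm nn h⟩
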